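/- Let R be a unital ring, let N be a submodule of an R-module M, and let 𝒜 be a set of R-modules. For each A ∈ 𝒜 fix a short exact sequence 0 → K_A →^{ι_A} P_A → A → 0 of R-modules with P_A projective. Then N is a σ_𝒜-pure submodule of M if and only if for every A ∈ 𝒜 and every pair of R-module homomorphisms s : K_A → N and s' : P_A → M making the square with ι_A : K_A → P_A and the inclusion N → M commute (i.e. the inclusion composed with s equals s' composed with ι_A), there exists an R-module homomorphism r : P_A → N with r ∘ ι_A = s. -/
import Mathlib

universe u v w x y z

/-- Factor a linear map through a surjection whose kernel it kills. -/
theorem factor_through_surj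
    {R : Type u} [Ring R]
    {P : Type v} [AddCommGroup P] [Module R P]
    {A : Type w} [AddCommGroup A] [Module R A]
    {X : Type x} [AddCommGroup X] [Module R X]
    (π : P →ₗ[R] A) (hπ : Function.Surjective π)
    (f : P →ₗ[R] X) (h : LinearMap.ker π ≤ LinearMap.ker f) :
    ∃ g : A →ₗ[R] X, g.comp π = f := by
  let e := π.quotKerEquivOfSurjective hπ
  refine ⟨(Submodule.liftQ _ f h).comp (e.symm : A →ₗ[R] P ⧸ LinearMap.ker π), ?_⟩
  ext x
  have : e.symm (π x) = Submodule.Quotient.mk x := by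
    apply e.injective
    simp [e, LinearMap.quotKerEquivOfSurjective, LinearMap.quotKerEquivRange]
  simp [this]

theorem sigma_pure_iff_lifting
    {R : Type u} [Ring R]
    {M : Type v} [AddCommGroup M] [Module R M] (N : Submodule R M)
    {ι : Type w}
    (A : ι → Type x) [∀ i, AddCommGroup (A i)] [∀ i, Module R (A i)]
    (K : ι → Type y) [∀ i, AddCommGroup (K i)] [∀ i, Module R (K i)]
    (P : ι → Type z) [∀ i, AddCommGroup (P i)] [∀ i, Module R (P i)]
    (ιA : ∀ i, K i →ₗ[R] P i) (πA : ∀ i, P i →ₗ[R] A i)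
    (_hproj : ∀ i, Module.Projective R (P i))
    (_hinj : ∀ i, Function.Injective (ιA i))
    (_hsurj : ∀ i, Function.Surjective (πA i))
    (_hexact : ∀ i, Function.Exact (ιA i) (πA i)) :
    (∀ i, Function.Surjective fun g : A i →ₗ[R] M => N.mkQ.comp g) ↔
      (∀ i (s : K i →ₗ[R] N) (s' : P i →ₗ[R] M),
        N.subtype.comp s = s'.comp (ιA i) →
          ∃ r : P i →ₗ[R] N, r.comp (ιA i) = s) := by
  constructor
  · intro hpure i s s' hsq
    -- mkQ ∘ s' kills range ι = ker π, so factors through A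
    have hker : LinearMap.ker (πA i) ≤ LinearMap.ker (N.mkQ.comp s') := by
      intro x hx
      rw [(_hexact i).linearMap_ker_eq] at hx
      obtain ⟨k, rfl⟩ := hx
      have : s' (ιA i k) = N.subtype (s k) := by
        rw [← LinearMap.comp_apply, ← hsq]; rfl
      simp [LinearMap.mem_ker, this]
    obtain ⟨g, hg⟩ := factor_through_surj (πA i) (_hsurj i) (N.mkQ.comp s') hker
    obtain ⟨g', hg'⟩ := hpure i g
    -- s' - g' ∘ π lands in N
    have hmem : ∀ x, s' x - g' (πA i x) ∈ N := by
      intro x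
      rw [← Submodule.Quotient.mk_eq_zero, Submodule.Quotient.mk_sub]
      have h1 : N.mkQ (s' x) = g (πA i x) := by
        have := congrArg (fun f => f x) hg
        simpa using this.symm
      have h2 : N.mkQ (g' (πA i x)) = g (πA i x) := by
        have := congrArg (fun f => f (πA i x)) hg'
        simpa using this
      change N.mkQ (s' x) - N.mkQ (g' (πA i x)) = 0
      rw [h1, h2, sub_self]
    refine ⟨LinearMap.codRestrict N (s' - g'.comp (πA i)) hmem, ?_⟩
    ext k
    have hπι : πA i (ιA i k) = 0 := by
      have := (_hexact i).apply_apply_eq_zero k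
      simpa using this
    have : s' (ιA i k) = N.subtype (s k) := by
      rw [← LinearMap.comp_apply, ← hsq]; rfl
    simp [LinearMap.codRestrict, hπι, this]
  · intro hlift i g
    -- lift g ∘ π along mkQ using projectivity
    obtain ⟨s', hs'⟩ := Module.projective_lifting_property (h := _hproj i) N.mkQ
      (g.comp (πA i)) N.mkQ_surjective
    -- s' ∘ ι lands in N
    have hmem : ∀ k, s' (ιA i k) ∈ N := by
      intro k
      rw [← Submodule.Quotient.mk_eq_zero]
      have h1 : N.mkQ (s' (ιA i k)) = g (πA i (ιA i k)) := by
        have := congrArg (fun f => f (ιA i k)) hs'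
        simpa using this
      have hπι : πA i (ιA i k) = 0 := by
        have := (_hexact i).apply_apply_eq_zero k
        simpa using this
      change N.mkQ (s' (ιA i k)) = 0
      rw [h1, hπι, map_zero]
    set s : K i →ₗ[R] N := LinearMap.codRestrict N (s'.comp (ιA i)) hmem with hs
    have hsq : N.subtype.comp s = s'.comp (ιA i) := by
      ext k; simp [hs, LinearMap.codRestrict]
    obtain ⟨r, hr⟩ := hlift i s s' hsq
    -- s' - subtype ∘ r vanishes on range ι = ker π, factors through A
    have hker : LinearMap.ker (πA i) ≤ LinearMap.ker (s' - N.subtype.comp r) := by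
      intro x hx
      rw [(_hexact i).linearMap_ker_eq] at hx
      obtain ⟨k, rfl⟩ := hx
      have h1 : r (ιA i k) = s k := by
        have := congrArg (fun f => f k) hr
        simpa using this
      have h2 : N.subtype (s k) = s' (ιA i k) := by
        have := congrArg (fun f => f k) hsq
        simpa using this
      simp only [LinearMap.mem_ker, LinearMap.sub_apply, LinearMap.comp_apply, h1, h2,
        sub_self]
    obtain ⟨h, hh⟩ := factor_through_surj (πA i) (_hsurj i) (s' - N.subtype.comp r) hker
    refine ⟨h, ?_⟩
    ext a
    obtain ⟨p, rfl⟩ := _hsurj i a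
    have h1 : h (πA i p) = s' p - N.subtype (r p) := by
      have := congrArg (fun f => f p) hh
      simpa using this
    have h2 : N.mkQ (s' p) = g (πA i p) := by
      have := congrArg (fun f => f p) hs'
      simpa using this
    simp only [LinearMap.comp_apply, h1, map_sub, h2]
    have : N.mkQ (N.subtype (r p)) = 0 := by
      simp [Submodule.Quotient.mk_eq_zero]
    rw [this, sub_zero]
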